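/- For integers 2 ≤ s ≤ r, G₁(r,s) < 2^s · (s(r−s)·ln 2 + 2·ln 2 + 1), where ln denotes the natural logarithm. -/

import Mathlib

/-- `A ⊆ F₂^r` is a *generic `(r,s)`-erasure correcting set* if for every `r × s` matrix `M`
over `F₂` of rank `s` there is `a ∈ A` such that the row vector `a·M` has Hamming weight `1`. -/
def IsGenericSet (r s : ℕ) (A : Set (Fin r → ZMod 2)) : Prop :=
  ∀ M : Matrix (Fin r) (Fin s) (ZMod 2), M.rank = s →
    ∃ a ∈ A, hammingNorm (Matrix.vecMul a M) = 1

/-- `F(r,s)`: the minimum cardinality of a generic `(r,s)`-set. -/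
noncomputable def Fgen (r s : ℕ) : ℕ :=
  sInf {n | ∃ A : Finset (Fin r → ZMod 2), IsGenericSet r s ↑A ∧ A.card = n}

/-- The standard bilinear form `⟨x,y⟩ = ∑ i, x i * y i` on `F₂^r`. -/
def bform {r : ℕ} (x y : Fin r → ZMod 2) : ZMod 2 := ∑ i, x i * y i

/-- `A ⊆ F₂^r` is an *(r,s)-set* if for every `s` linearly independent vectors `v₁, …, v_s`
there is `c ∈ A` with `⟨c, v_j⟩ = 1` for all `j`. -/
def IsRSSet (r s : ℕ) (A : Set (Fin r → ZMod 2)) : Prop :=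
  ∀ v : Fin s → (Fin r → ZMod 2), LinearIndependent (ZMod 2) v →
    ∃ c ∈ A, ∀ j, bform c (v j) = 1

/-- `G₁(r,s)`: the minimum cardinality of an `(r,s)`-set. -/
noncomputable def G1 (r s : ℕ) : ℕ :=
  sInf {n | ∃ A : Finset (Fin r → ZMod 2), IsRSSet r s ↑A ∧ A.card = n}

/-- `A ⊆ F₂^r` is an *(r,s)-good set* if for every `s` linearly independent vectors
`v₁, …, v_s` and every `x ∈ F₂^s` there is `c ∈ A` with `⟨c, v_j⟩ = x j` for all `j`. -/
def IsGoodSet (r s : ℕ) (A : Set (Fin r → ZMod 2)) : Prop :=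
  ∀ v : Fin s → (Fin r → ZMod 2), LinearIndependent (ZMod 2) v →
    ∀ x : Fin s → ZMod 2, ∃ c ∈ A, ∀ j, bform c (v j) = x j

/-- `G(r,s)`: the minimum cardinality of an `(r,s)`-good set. -/
noncomputable def Ggood (r s : ℕ) : ℕ :=
  sInf {n | ∃ A : Finset (Fin r → ZMod 2), IsGoodSet r s ↑A ∧ A.card = n}

/-- A linear code `C ⊆ F₂^ι` is *s-wise intersecting* if every `s` linearly independent
codewords have a common coordinate where they are all nonzero. -/
def IsIntersectingCode {ι : Type*} (s : ℕ) (C : Submodule (ZMod 2) (ι → ZMod 2)) : Prop :=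
  ∀ u : Fin s → (ι → ZMod 2), (∀ j, u j ∈ C) → LinearIndependent (ZMod 2) u →
    ∃ i, ∀ j, u j i ≠ 0

/-- `n(k,s)`: the minimum length `n` for which an `s`-wise intersecting `[n,k]` code exists. -/
noncomputable def minIntLen (k s : ℕ) : ℕ :=
  sInf {n | ∃ C : Submodule (ZMod 2) (Fin n → ZMod 2),
    Module.finrank (ZMod 2) C = k ∧ IsIntersectingCode s C}

/-- The Gaussian binomial coefficient `[k choose s]₂` as a real number. -/
noncomputable def gaussBinom (k s : ℕ) : ℝ :=
  ∏ i ∈ Finset.range s, ((2:ℝ)^(k-i) - 1) / ((2:ℝ)^(s-i) - 1)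


open Finset

abbrev F2 := ZMod 2
abbrev Vr (r : ℕ) := Fin r → ZMod 2

/-- the bilinear form as a linear map into the dual -/
noncomputable def Bf (r : ℕ) : Vr r →ₗ[F2] Module.Dual F2 (Vr r) :=
  LinearMap.mk₂ F2 (fun x y => bform x y)
    (by intro x x' y; simp [bform, add_mul, Finset.sum_add_distrib])
    (by intro c x y; simp [bform, Finset.mul_sum, mul_assoc]
        )
    (by intro x y y'; simp [bform, mul_add, Finset.sum_add_distrib])
    (by intro c x y; simp [bform, Finset.mul_sum]; ring_nf; simp [mul_assoc, mul_left_comm])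

theorem Bf_apply {r : ℕ} (x y : Vr r) : Bf r x y = bform x y := rfl

theorem bform_single {r : ℕ} (x : Vr r) (i : Fin r) : bform x (Pi.single i 1) = x i := by
  simp [bform, Pi.single_apply, mul_ite, Finset.sum_ite_eq']

theorem Bf_injective (r : ℕ) : Function.Injective (Bf r) := by
  rw [injective_iff_map_eq_zero]
  intro x hx
  funext i
  have := congrArg (fun φ : Module.Dual F2 (Vr r) => φ (Pi.single i 1)) hx
  simpa [Bf_apply, bform_single] using this

theorem Bf_surjective (r : ℕ) : Function.Surjective (Bf r) := by
  have h := (LinearMap.injective_iff_surjective_of_finrank_eq_finrank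
    (f := Bf r) (by rw [Subspace.dual_finrank_eq]))
  exact h.mp (Bf_injective r)
open Finset in
open scoped Classical in
theorem card_LI (W : Type) [AddCommGroup W] [Module F2 W] [Fintype W] (k : ℕ) :
    (univ.filter (fun v : Fin k → W => LinearIndependent F2 v)).card
      = ∏ i ∈ range k, (Fintype.card W - 2^i) := by
  induction k with
  | zero =>
      rw [Finset.filter_true_of_mem (fun v _ => linearIndependent_empty_type)]
      simp
  | succ k ih =>
      rw [Finset.prod_range_succ, ← ih]
      rw [Finset.card_eq_sum_card_fiberwise
        (f := fun v : Fin (k+1) → W => Fin.tail v)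
        (t := univ.filter (fun v : Fin k → W => LinearIndependent F2 v))
        (by
          intro v hv
          simp only [mem_coe, mem_filter, mem_univ, true_and] at hv ⊢
          exact hv.comp Fin.succ (Fin.succ_injective k))]
      rw [Finset.sum_congr rfl (fun w hw => ?_), Finset.sum_const, smul_eq_mul]
      simp only [mem_filter, mem_univ, true_and] at hw
      have hcs : (univ.filter (fun x : W => x ∈ Submodule.span F2 (Set.range w))).card
          = 2^k := by
        rw [← Fintype.card_subtype]
        rw [Module.card_eq_pow_finrank (K := F2)
            (V := {x : W // x ∈ Submodule.span F2 (Set.range w)}),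
          finrank_span_eq_card hw]
        simp [ZMod.card]
      have key : ((univ.filter (fun v : Fin (k+1) → W => LinearIndependent F2 v)).filter
          (fun v => Fin.tail v = w)).card
          = (univ.filter (fun x : W => x ∉ Submodule.span F2 (Set.range w))).card := by
        apply Finset.card_bij (fun v _ => v 0)
        · intro v hv
          simp only [mem_filter, mem_univ, true_and] at hv ⊢
          obtain ⟨hli, htail⟩ := hv
          have h2 := linearIndependent_fin_succ.mp hli
          rw [htail] at h2
          exact h2.2
        · intro v hv v' hv' h0
          simp only [mem_filter, mem_univ, true_and] at hv hv'
          funext i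
          refine Fin.cases ?_ ?_ i
          · exact h0
          · intro j
            have : Fin.tail v j = Fin.tail v' j := by rw [hv.2, hv'.2]
            exact this
        · intro x hx
          simp only [mem_filter, mem_univ, true_and] at hx
          refine ⟨Fin.cons x w, ?_, ?_⟩
          · simp only [mem_filter, mem_univ, true_and]
            refine ⟨linearIndependent_fin_cons.mpr ⟨hw, hx⟩, ?_⟩
            funext j; rfl
          · simp
      rw [key]
      have hsplit := Finset.card_filter_add_card_filter_not
        (s := (univ : Finset W)) (p := fun x => x ∈ Submodule.span F2 (Set.range w))
      have hcard : (univ : Finset W).card = Fintype.card W := rfl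
      omega
instance (r : ℕ) : Finite (Submodule F2 (Vr r)) :=
  Finite.of_injective (fun V => (V : Set (Vr r))) SetLike.coe_injective

noncomputable instance (r : ℕ) : Fintype (Submodule F2 (Vr r)) := Fintype.ofFinite _

open Finset in
open scoped Classical in
theorem card_subspaces (r s : ℕ) :
    ∏ i ∈ range s, (2^r - 2^i)
      = (univ.filter (fun V : Submodule F2 (Vr r) => Module.finrank F2 V = s)).card
        * ∏ i ∈ range s, (2^s - 2^i) := by
  have hcardF : Fintype.card (Vr r) = 2^r := by
    rw [Fintype.card_fun]; simp [ZMod.card]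
  have h1 := card_LI (Vr r) s
  rw [hcardF] at h1
  rw [← h1]
  rw [Finset.card_eq_sum_card_fiberwise
    (f := fun v : Fin s → Vr r => Submodule.span F2 (Set.range v))
    (t := univ.filter (fun V : Submodule F2 (Vr r) => Module.finrank F2 V = s))
    (by
      intro v hv
      simp only [mem_coe, mem_filter, mem_univ, true_and] at hv ⊢
      rw [finrank_span_eq_card hv, Fintype.card_fin])]
  rw [Finset.sum_congr rfl (fun V hV => ?_), Finset.sum_const, smul_eq_mul]
  simp only [mem_filter, mem_univ, true_and] at hV
  have hcardV : Fintype.card ↥V = 2^s := by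
    rw [Module.card_eq_pow_finrank (K := F2) (V := ↥V), hV]; simp [ZMod.card]
  have h2 := card_LI ↥V s
  rw [hcardV] at h2
  rw [← h2]
  apply Finset.card_bij (fun v hv => fun j =>
    (⟨v j, by
      have hsp : Submodule.span F2 (Set.range v) = V := (Finset.mem_filter.mp hv).2
      rw [← hsp]
      exact Submodule.subset_span (Set.mem_range_self j)⟩ : ↥V))
  · intro v hv
    simp only [mem_filter, mem_univ, true_and] at hv ⊢
    apply LinearIndependent.of_comp V.subtype
    exact hv.1
  · intro v hv v' hv' h
    funext j
    exact congrArg Subtype.val (congrFun h j)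
  · intro u hu
    simp only [mem_filter, mem_univ, true_and] at hu
    have hli : LinearIndependent F2 (fun j => (u j : Vr r)) := by
      have := hu.map' V.subtype (Submodule.ker_subtype V)
      exact this
    have hsp : Submodule.span F2 (Set.range (fun j => (u j : Vr r))) = V := by
      have hrange : Set.range (fun j => (u j : Vr r)) = V.subtype '' Set.range u := by
        rw [← Set.range_comp]; rfl
      have htop : Submodule.span F2 (Set.range u) = ⊤ := by
        apply Submodule.eq_top_of_finrank_eq
        rw [finrank_span_eq_card hu, Fintype.card_fin, hV]
      rw [hrange, Submodule.span_image, htop, Submodule.map_subtype_top]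
    refine ⟨fun j => (u j : Vr r), ?_, ?_⟩
    · simp only [mem_filter, mem_univ, true_and]
      exact ⟨hli, hsp⟩
    · funext j; exact rfl
noncomputable def Lmap (r : ℕ) (V : Submodule F2 (Vr r)) :
    Vr r →ₗ[F2] Module.Dual F2 ↥V :=
  (V.subtype.dualMap).comp (Bf r)

theorem Lmap_apply {r : ℕ} (V : Submodule F2 (Vr r)) (c : Vr r) (x : ↥V) :
    Lmap r V c x = bform c ↑x := rfl

theorem Lmap_surjective (r : ℕ) (V : Submodule F2 (Vr r)) :
    Function.Surjective (Lmap r V) := by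
  have h1 : Function.Surjective (V.subtype.dualMap) :=
    LinearMap.dualMap_surjective_of_injective (Submodule.injective_subtype V)
  exact h1.comp (Bf_surjective r)

instance (r : ℕ) (V : Submodule F2 (Vr r)) : Finite (Module.Dual F2 ↥V) :=
  Finite.of_injective (fun φ => (φ : ↥V → F2)) DFunLike.coe_injective

noncomputable instance (r : ℕ) (V : Submodule F2 (Vr r)) :
    Fintype (Module.Dual F2 ↥V) := Fintype.ofFinite _

theorem card_dual {r s : ℕ} (V : Submodule F2 (Vr r)) (hV : Module.finrank F2 ↥V = s) :
    Fintype.card (Module.Dual F2 ↥V) = 2^s := by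
  rw [Module.card_eq_pow_finrank (K := F2), Subspace.dual_finrank_eq, hV]
  simp [ZMod.card]

theorem finrank_Vr (r : ℕ) : Module.finrank F2 (Vr r) = r := by
  simp [Module.finrank_pi]

open Finset in
open scoped Classical in
theorem card_fiber {r s : ℕ} (hsr : s ≤ r) (V : Submodule F2 (Vr r))
    (hV : Module.finrank F2 ↥V = s) (φ : Module.Dual F2 ↥V) :
    (univ.filter (fun c : Vr r => Lmap r V c = φ)).card = 2^(r-s) := by
  obtain ⟨c₀, hc₀⟩ := Lmap_surjective r V φ
  have hker : (univ.filter (fun c : Vr r => Lmap r V c = 0)).card = 2^(r-s) := by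
    rw [← Fintype.card_subtype]
    have : Fintype.card {c : Vr r // Lmap r V c = 0}
        = Fintype.card ↥(LinearMap.ker (Lmap r V)) := by
      apply Fintype.card_congr
      exact Equiv.subtypeEquivRight (fun c => (LinearMap.mem_ker).symm)
    rw [this, Module.card_eq_pow_finrank (K := F2)]
    have hrk := LinearMap.finrank_range_add_finrank_ker (Lmap r V)
    rw [LinearMap.range_eq_top.mpr (Lmap_surjective r V), finrank_top] at hrk
    have hdual : Module.finrank F2 (Module.Dual F2 ↥V) = s := by
      rw [Subspace.dual_finrank_eq, hV]
    rw [hdual, finrank_Vr] at hrk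
    have : Module.finrank F2 ↥(LinearMap.ker (Lmap r V)) = r - s := by omega
    rw [this]; simp [ZMod.card]
  rw [← hker]
  have addself : ∀ {M : Type} [inst : AddCommGroup M] [inst2 : Module F2 M] (x : M),
      x + x = 0 := by
    intro M _ _ x
    have h := two_smul F2 x
    rw [show ((2:F2)) = 0 by decide] at h
    simpa using h.symm
  apply Finset.card_bij (fun c _ => c + c₀) <;> simp only [mem_filter, mem_univ, true_and]
  · intro c hc; rw [map_add, hc, hc₀, addself]
  · intro c _ c' _ h; exact add_right_cancel h
  · intro d hd
    refine ⟨d + c₀, ?_, by rw [add_assoc, addself, add_zero]⟩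
    rw [map_add, hd, hc₀, zero_add]

open Finset in
theorem card_pi_filter {α : Type} [Fintype α] (n : ℕ) (Q : α → Prop)
    [DecidablePred Q] [DecidablePred (fun a : Fin n → α => ∀ t, Q (a t))] :
    (univ.filter (fun a : Fin n → α => ∀ t, Q (a t))).card = (univ.filter Q).card ^ n := by
  rw [← Fintype.card_subtype, ← Fintype.card_subtype]
  rw [Fintype.card_congr (Equiv.subtypePiEquivPi (p := fun (_ : Fin n) (b : α) => Q b))]
  rw [Fintype.card_pi]
  simp

open Finset in
open scoped Classical in
theorem card_avoiders {r s : ℕ} (hsr : s ≤ r) (n : ℕ) (V : Submodule F2 (Vr r))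
    (hV : Module.finrank F2 ↥V = s) (φ : Module.Dual F2 ↥V) :
    (univ.filter (fun a : Fin n → Vr r => ∀ t, ¬ Lmap r V (a t) = φ)).card
      = (2^r - 2^(r-s))^n := by
  rw [card_pi_filter n (fun c : Vr r => ¬ Lmap r V c = φ)]
  congr 1
  have hfib := card_fiber hsr V hV φ
  have hcardF : Fintype.card (Vr r) = 2^r := by rw [Fintype.card_fun]; simp [ZMod.card]
  have hsplit : (univ.filter (fun c : Vr r => Lmap r V c = φ)).card
      + (univ.filter (fun c : Vr r => ¬ Lmap r V c = φ)).card = 2^r := by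
    rw [Finset.card_filter_add_card_filter_not, Finset.card_univ, hcardF]
  omega
set_option maxHeartbeats 1000000 in
open Finset in
open scoped Classical in
theorem G1_le (r s n : ℕ) (hs : 2 ≤ s) (hsr : s ≤ r) :
    ∃ U : ℕ,
      G1 r s ≤ n + U ∧
      U * ((2^r)^n)
        ≤ ((univ.filter (fun V : Submodule F2 (Vr r) => Module.finrank F2 V = s)).card
            * (2^s - 1)) * (2^r - 2^(r-s))^n := by
  set 𝒱 := univ.filter (fun V : Submodule F2 (Vr r) => Module.finrank F2 V = s) with h𝒱
  set 𝒥 : Finset (Σ V : Submodule F2 (Vr r), Module.Dual F2 ↥V) :=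
    𝒱.sigma (fun V => univ.filter (fun φ : Module.Dual F2 ↥V => φ ≠ 0)) with h𝒥
  have hmem𝒥 : ∀ p : (Σ V : Submodule F2 (Vr r), Module.Dual F2 ↥V),
      p ∈ 𝒥 ↔ (Module.finrank F2 ↥p.1 = s ∧ p.2 ≠ 0) := by
    intro p
    simp [h𝒥, h𝒱, Finset.mem_sigma]
  have hcard𝒥 : 𝒥.card = 𝒱.card * (2^s - 1) := by
    rw [h𝒥, Finset.card_sigma]
    rw [Finset.sum_congr rfl (fun V hV => ?_), Finset.sum_const, smul_eq_mul]
    rw [Finset.filter_ne', Finset.card_erase_of_mem (mem_univ _), Finset.card_univ]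
    rw [card_dual V (by simpa [h𝒱] using hV)]
  have key : ∀ a : Fin n → Vr r,
      ∑ p ∈ 𝒥, (if ∀ t, ¬ Lmap r p.1 (a t) = p.2 then 1 else 0) =
        (𝒥.filter (fun p : (Σ V : Submodule F2 (Vr r), Module.Dual F2 ↥V) =>
          ∀ t, ¬ Lmap r p.1 (a t) = p.2)).card := by
    intro a; rw [Finset.card_filter]
  have havg : ∑ a : Fin n → Vr r,
      (𝒥.filter (fun p : (Σ V : Submodule F2 (Vr r), Module.Dual F2 ↥V) =>
        ∀ t, ¬ Lmap r p.1 (a t) = p.2)).card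
      = 𝒥.card * (2^r - 2^(r-s))^n := by
    have hswap : ∑ a : Fin n → Vr r,
        (𝒥.filter (fun p : (Σ V : Submodule F2 (Vr r), Module.Dual F2 ↥V) =>
          ∀ t, ¬ Lmap r p.1 (a t) = p.2)).card
        = ∑ p ∈ 𝒥, (univ.filter
            (fun a : Fin n → Vr r => ∀ t, ¬ Lmap r p.1 (a t) = p.2)).card := by
      simp only [← key, Finset.card_filter]
      rw [Finset.sum_comm]
    rw [hswap]
    rw [Finset.sum_congr rfl
      (fun p hp => card_avoiders hsr n p.1 ((hmem𝒥 p).mp hp).1 p.2),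
      Finset.sum_const, smul_eq_mul]
  -- pigeonhole
  have hcards : Fintype.card (Fin n → Vr r) = (2^r)^n := by
    rw [Fintype.card_fun, Fintype.card_fun]; simp [ZMod.card]
  have hpigeon : ∃ a : Fin n → Vr r,
      (𝒥.filter (fun p : (Σ V : Submodule F2 (Vr r), Module.Dual F2 ↥V) =>
        ∀ t, ¬ Lmap r p.1 (a t) = p.2)).card * (2^r)^n
        ≤ 𝒥.card * (2^r - 2^(r-s))^n := by
    have hex := Finset.exists_le_of_sum_le
      (s := (univ : Finset (Fin n → Vr r)))
      (f := fun a => (𝒥.filter (fun p : (Σ V : Submodule F2 (Vr r), Module.Dual F2 ↥V) =>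
        ∀ t, ¬ Lmap r p.1 (a t) = p.2)).card * (2^r)^n)
      (g := fun _ => 𝒥.card * (2^r - 2^(r-s))^n)
      Finset.univ_nonempty
      (by
        rw [← Finset.sum_mul, havg, Finset.sum_const, Finset.card_univ, hcards, smul_eq_mul]
        rw [mul_comm])
    obtain ⟨aa, _, haa⟩ := hex
    exact ⟨aa, haa⟩
  obtain ⟨a, ha⟩ := hpigeon
  set uncov := 𝒥.filter (fun p : (Σ V : Submodule F2 (Vr r), Module.Dual F2 ↥V) =>
    ∀ t, ¬ Lmap r p.1 (a t) = p.2) with huncov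
  let cp : (Σ V : Submodule F2 (Vr r), Module.Dual F2 ↥V) → Vr r :=
    fun p : (Σ V : Submodule F2 (Vr r), Module.Dual F2 ↥V) =>
    if h : ∃ c, Lmap r p.1 c = p.2 then h.choose else 0
  have hcp : ∀ p : (Σ V : Submodule F2 (Vr r), Module.Dual F2 ↥V),
      Lmap r p.1 (cp p) = p.2 := by
    intro p
    have h : ∃ c, Lmap r p.1 c = p.2 := Lmap_surjective r p.1 p.2
    simp only [cp, dif_pos h]
    exact h.choose_spec
  set A : Finset (Vr r) := (univ.image a) ∪ uncov.image cp with hA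
  have hRS : IsRSSet r s ↑A := by
    intro v hv
    let V : Submodule F2 (Vr r) := Submodule.span F2 (Set.range v)
    have hVrk : Module.finrank F2 ↥V = s := by
      have h := finrank_span_eq_card (R := F2) hv
      rw [Fintype.card_fin] at h
      exact h
    have hs0 : (0 : ℕ) < s := lt_of_lt_of_le (by norm_num) hs
    let b : Module.Basis (Fin s) F2 ↥V := Module.Basis.span hv
    let φ : Module.Dual F2 ↥V := (b.constr F2) (fun _ => (1 : F2))
    have hφb : ∀ j, φ (b j) = 1 := fun j => Module.Basis.constr_basis b F2 _ j
    have hφne : φ ≠ 0 := by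
      intro h0
      have h1 := hφb ⟨0, hs0⟩
      rw [h0] at h1
      simp at h1
    have hmem : (⟨V, φ⟩ : Σ V : Submodule F2 (Vr r), Module.Dual F2 ↥V) ∈ 𝒥 :=
      (hmem𝒥 _).mpr ⟨hVrk, hφne⟩
    have hkey : ∀ c : Vr r, Lmap r V c = φ → ∀ j, bform c (v j) = 1 := by
      intro c hc j
      have hbj : ((b j : ↥V) : Vr r) = v j := congrArg Subtype.val (Module.Basis.span_apply hv j)
      have h2 : Lmap r V c (b j) = φ (b j) := by rw [hc]
      rw [Lmap_apply, hbj, hφb j] at h2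
      exact h2
    by_cases hex : ∃ t, Lmap r V (a t) = φ
    · obtain ⟨t, ht⟩ := hex
      refine ⟨a t, ?_, hkey (a t) ht⟩
      simp only [hA, Finset.coe_union, Set.mem_union]
      exact Or.inl (by simp)
    · push_neg at hex
      have hunc : (⟨V, φ⟩ : Σ V : Submodule F2 (Vr r), Module.Dual F2 ↥V) ∈ uncov := by
        rw [huncov, Finset.mem_filter]
        exact ⟨hmem, fun t => hex t⟩
      refine ⟨cp ⟨V, φ⟩, ?_, hkey _ (hcp ⟨V, φ⟩)⟩
      simp only [hA, Finset.coe_union, Set.mem_union]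
      exact Or.inr (by
        simp only [Finset.coe_image, Set.mem_image]
        exact ⟨⟨V, φ⟩, by simpa using hunc, rfl⟩)
  refine ⟨uncov.card, ?_, by rw [← hcard𝒥]; exact ha⟩
  have hG1 : G1 r s ≤ A.card := Nat.sInf_le ⟨A, hRS, rfl⟩
  calc G1 r s ≤ A.card := hG1
    _ ≤ (univ.image a).card + (uncov.image cp).card := Finset.card_union_le _ _
    _ ≤ n + uncov.card := by
        gcongr
        · exact le_trans (Finset.card_image_le) (by simp)
        · exact Finset.card_image_le
theorem prod_lb : ∀ s : ℕ, 1 ≤ s →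
    (1 + 2*((2:ℝ)^s)⁻¹)/4 ≤ ∏ j ∈ Finset.range s, (1 - ((2:ℝ)^(j+1))⁻¹) := by
  intro s hs
  induction s, hs using Nat.le_induction with
  | base => norm_num
  | succ s hs ih =>
      rw [Finset.prod_range_succ]
      have h2 : (2:ℝ) ≤ 2^s := by
        calc (2:ℝ) = 2^1 := (pow_one 2).symm
          _ ≤ 2^s := by
            apply pow_le_pow_right₀ (by norm_num) hs
      have ht : ((2:ℝ)^s)⁻¹ ≤ 1/2 := by
        rw [inv_le_comm₀ (by positivity) (by norm_num)]
        simpa using h2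
      have ht0 : 0 < ((2:ℝ)^s)⁻¹ := by positivity
      have hfac : (0:ℝ) ≤ 1 - ((2:ℝ)^(s+1))⁻¹ := by
        have h3 : ((2:ℝ)^(s+1))⁻¹ ≤ 1 := by
          rw [inv_le_one₀ (by positivity)]
          exact one_le_pow₀ (by norm_num)
        linarith
      have h1 : ((2:ℝ)^(s+1))⁻¹ = ((2:ℝ)^s)⁻¹ / 2 := by
        rw [pow_succ, mul_inv]; ring
      have hstep : (1 + 2*((2:ℝ)^(s+1))⁻¹)/4
          ≤ ((1 + 2*((2:ℝ)^s)⁻¹)/4) * (1 - ((2:ℝ)^(s+1))⁻¹) := by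
        rw [h1]
        nlinarith [ht, ht0]
      calc (1 + 2*((2:ℝ)^(s+1))⁻¹)/4
          ≤ ((1 + 2*((2:ℝ)^s)⁻¹)/4) * (1 - ((2:ℝ)^(s+1))⁻¹) := hstep
        _ ≤ (∏ j ∈ Finset.range s, (1 - ((2:ℝ)^(j+1))⁻¹)) * (1 - ((2:ℝ)^(s+1))⁻¹) :=
            mul_le_mul_of_nonneg_right ih hfac

theorem cast_Bs (s : ℕ) :
    ((∏ i ∈ Finset.range s, (2^s - 2^i) : ℕ) : ℝ)
      = 2^(s*s) * ∏ j ∈ Finset.range s, (1 - ((2:ℝ)^(j+1))⁻¹) := by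
  rw [Nat.cast_prod]
  rw [Finset.prod_congr rfl (fun i hi => ?_) (g := fun i => (2:ℝ)^s - 2^i)]
  · rw [← Finset.prod_range_reflect]
    rw [Finset.prod_congr rfl (fun j hj => ?_)
        (g := fun j => (2:ℝ)^s * (1 - ((2:ℝ)^(j+1))⁻¹))]
    · rw [Finset.prod_mul_distrib, Finset.prod_const, Finset.card_range, ← pow_mul]
    · have hj' : j < s := Finset.mem_range.mp hj
      have hexp : s - 1 - j + (j+1) = s := by omega
      have h2 : (2:ℝ)^(s-1-j) * (2:ℝ)^(j+1) = 2^s := by rw [← pow_add, hexp]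
      have h3 : (2:ℝ)^s * ((2:ℝ)^(j+1))⁻¹ = 2^(s-1-j) := by
        field_simp
        linarith [h2]
      show (2:ℝ)^s - 2^(s-1-j) = 2^s * (1 - ((2:ℝ)^(j+1))⁻¹)
      rw [mul_sub, mul_one, h3]
  · have hle : (2:ℕ)^i ≤ 2^s :=
      Nat.pow_le_pow_right (by norm_num) (le_of_lt (Finset.mem_range.mp hi))
    push_cast [hle]
    ring
set_option maxHeartbeats 1000000 in
open Finset in
open scoped Classical in
theorem statement15_aux (r s : ℕ) (hs : 2 ≤ s) (hsr : s ≤ r) :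
    (G1 r s : ℝ) <
      (2:ℝ) ^ s * ((s:ℝ) * ((r:ℝ) - s) * Real.log 2 + 2 * Real.log 2 + 1) := by
  have hlog2 : 0 < Real.log 2 := Real.log_pos (by norm_num)
  have hDpos : 0 < ∏ i ∈ Finset.range s, (2^r - 2^i) := by
    apply Finset.prod_pos
    intro i hi
    have hir : i < r := lt_of_lt_of_le (Finset.mem_range.mp hi) hsr
    have h2 : (2:ℕ)^i < 2^r := Nat.pow_lt_pow_right (by norm_num) hir
    omega
  have hBD := card_subspaces r s
  set N := (univ.filter (fun V : Submodule F2 (Vr r) => Module.finrank F2 V = s)).card with hN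
  have hNpos : 0 < N := by
    rcases Nat.eq_zero_or_pos N with h0 | h
    · rw [h0, zero_mul] at hBD; omega
    · exact h
  set t : ℝ := ((2:ℝ)^s)⁻¹ with ht
  have ht0 : 0 < t := by positivity
  have h4s : (4:ℝ) ≤ 2^s := by
    calc (4:ℝ) = 2^2 := by norm_num
      _ ≤ 2^s := pow_le_pow_right₀ (by norm_num) hs
  have ht1 : t ≤ 1/4 := by
    rw [ht, inv_le_comm₀ (by positivity) (by norm_num)]
    norm_num
    exact h4s
  have h2st : (2:ℝ)^s * t = 1 := by rw [ht]; field_simp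
  set T : ℝ := (N:ℝ) * ((2:ℝ)^s - 1) with hT
  have hTpos : 0 < T := by
    rw [hT]
    apply mul_pos
    · exact_mod_cast hNpos
    · linarith
  have hTt : T * t = (N:ℝ) * (1 - t) := by
    have h1 : ((2:ℝ)^s - 1) * t = 1 - t := by rw [sub_mul, h2st, one_mul]
    rw [hT, mul_assoc, h1]
  have hQ := prod_lb s (by omega)
  have hBs := cast_Bs s
  have hNle : (N:ℝ) * (2^(s*s) * ((1 + 2*t)/4)) ≤ 2^(r*s) := by
    have h2 : (∏ i ∈ Finset.range s, (2^r - 2^i)) ≤ 2^(r*s) := by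
      calc ∏ i ∈ Finset.range s, (2^r - 2^i) ≤ ∏ i ∈ Finset.range s, 2^r :=
            Finset.prod_le_prod (fun _ _ => Nat.zero_le _) (fun i _ => Nat.sub_le _ _)
        _ = 2^(r*s) := by rw [Finset.prod_const, Finset.card_range, ← pow_mul]
    have h1 : ((∏ i ∈ Finset.range s, (2^r - 2^i) : ℕ) : ℝ) ≤ 2^(r*s) := by
      exact_mod_cast h2
    have h3 : (N:ℝ) * ((∏ i ∈ Finset.range s, (2^s - 2^i) : ℕ):ℝ) ≤ 2^(r*s) := by
      rw [← Nat.cast_mul, ← hBD]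
      exact h1
    calc (N:ℝ) * (2^(s*s) * ((1+2*t)/4))
        ≤ (N:ℝ) * (2^(s*s) * (∏ j ∈ Finset.range s, (1 - ((2:ℝ)^(j+1))⁻¹))) := by
          apply mul_le_mul_of_nonneg_left _ (Nat.cast_nonneg N)
          exact mul_le_mul_of_nonneg_left hQ (by positivity)
      _ = (N:ℝ) * ((∏ i ∈ Finset.range s, (2^s - 2^i) : ℕ):ℝ) := by rw [hBs]
      _ ≤ 2^(r*s) := h3
  have hpow : (2:ℝ)^(s*(r-s)) * 2^(s*s) = 2^(r*s) := by
    rw [← pow_add]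
    congr 1
    obtain ⟨k, rfl⟩ := Nat.exists_eq_add_of_le hsr
    rw [Nat.add_sub_cancel_left]
    ring
  have h1t : 0 < 1 - t := by linarith
  have h12t : (1:ℝ) < 1 + 2*t := by linarith
  have hexp1 : 1 - t ≤ Real.exp (-t) := by
    have := Real.add_one_le_exp (-t); linarith
  have hTkey : T * t < 2^(s*(r-s)) * 4 * Real.exp (-t) := by
    have hN2 : (N:ℝ) ≤ 2^(s*(r-s)) * 4 / (1+2*t) := by
      rw [le_div_iff₀ (by linarith)]
      have hpos : (0:ℝ) < 2^(s*s) := by positivity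
      nlinarith [hNle, hpow]
    calc T * t = (N:ℝ)*(1-t) := hTt
      _ ≤ (2^(s*(r-s)) * 4 / (1+2*t)) * (1-t) :=
          mul_le_mul_of_nonneg_right hN2 (le_of_lt h1t)
      _ = (2^(s*(r-s)) * 4) * ((1-t)/(1+2*t)) := by ring
      _ < 2^(s*(r-s)) * 4 * Real.exp (-t) := by
          apply mul_lt_mul_of_pos_left _ (by positivity)
          exact lt_of_lt_of_le (div_lt_self h1t h12t) hexp1
  set x : ℝ := 2^s * Real.log (T * t) with hx
  set n : ℕ := ⌈x⌉₊ with hn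
  obtain ⟨U, hG, hU⟩ := G1_le r s n hs hsr
  rw [← hN] at hU
  have hA : ((2^s - 1 : ℕ) : ℝ) = (2:ℝ)^s - 1 := by
    have h1 : (1:ℕ) ≤ 2^s := Nat.one_le_two_pow
    push_cast [h1]
    ring
  have hB : ((2^r - 2^(r-s) : ℕ) : ℝ) = (2:ℝ)^r * (1-t) := by
    have hle : (2:ℕ)^(r-s) ≤ 2^r := Nat.pow_le_pow_right (by norm_num) (Nat.sub_le r s)
    push_cast [hle]
    have hh : (2:ℝ)^(r-s) * 2^s = 2^r := by rw [← pow_add, Nat.sub_add_cancel hsr]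
    have h5 : (2:ℝ)^(r-s) = 2^r * t := by
      rw [ht]
      field_simp
      linarith [hh]
    rw [h5]; ring
  have hUfin : (U:ℝ) ≤ T * (1-t)^n := by
    have hUr : (U:ℝ) * ((2:ℝ)^r)^n ≤ (T * (1-t)^n) * ((2:ℝ)^r)^n := by
      calc (U:ℝ) * ((2:ℝ)^r)^n = ((U * (2^r)^n : ℕ) : ℝ) := by push_cast; ring
        _ ≤ ((N * (2^s - 1) * (2^r - 2^(r-s))^n : ℕ) : ℝ) := Nat.cast_le.mpr hU
        _ = (T * (1-t)^n) * ((2:ℝ)^r)^n := by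
            rw [Nat.cast_mul, Nat.cast_mul, Nat.cast_pow, hA, hB, hT]
            rw [mul_pow]
            ring
    have hp : (0:ℝ) < ((2:ℝ)^r)^n := by positivity
    exact le_of_mul_le_mul_right hUr hp
  by_cases hc : T * t ≤ 1
  · -- small case
    have hn0 : n = 0 := by
      rw [hn, Nat.ceil_eq_zero]
      rw [hx]
      have hl : Real.log (T*t) ≤ 0 := Real.log_nonpos (by positivity) hc
      have hp : (0:ℝ) < 2^s := by positivity
      nlinarith
    have hUT : (U:ℝ) ≤ T := by
      have := hUfin
      rw [hn0] at this
      simpa using this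
    have hT2 : T ≤ 2^s := by
      have hp : (0:ℝ) < 2^s := by positivity
      nlinarith [hc, h2st]
    have hGr : (G1 r s : ℝ) ≤ (n:ℝ) + U := by exact_mod_cast hG
    rw [hn0] at hGr
    have hD0 : 0 ≤ (s:ℝ)*((r:ℝ)-s)*Real.log 2 := by
      apply mul_nonneg (mul_nonneg (Nat.cast_nonneg s) _) (le_of_lt hlog2)
      have : (s:ℝ) ≤ r := by exact_mod_cast hsr
      linarith
    have hp : (0:ℝ) < 2^s := by positivity
    push_cast at hGr
    nlinarith [hGr, hUT, hT2, hD0, hlog2, hp]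
  · push_neg at hc
    have hTtpos : 0 < T * t := lt_trans one_pos hc
    have hx0 : 0 ≤ x := by
      rw [hx]
      exact mul_nonneg (by positivity) (Real.log_nonneg (le_of_lt hc))
    have hxn : x ≤ (n:ℝ) := Nat.le_ceil x
    have hn1 : (n:ℝ) < x + 1 := Nat.ceil_lt_add_one hx0
    have hU2 : (U:ℝ) ≤ 2^s := by
      have h1 : (1-t)^n ≤ Real.exp (-t)^n := pow_le_pow_left₀ (le_of_lt h1t) hexp1 n
      have h2 : Real.exp (-t)^n = Real.exp (-(t*n)) := by
        rw [← Real.exp_nat_mul]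
        ring_nf
      have h3 : Real.exp (-(t*(n:ℝ))) ≤ Real.exp (-(t*x)) :=
        Real.exp_le_exp.mpr (by nlinarith [ht0, hxn])
      have h4 : t * x = Real.log (T*t) := by
        rw [hx, ← mul_assoc, mul_comm t, h2st, one_mul]
      have h5 : Real.exp (-(t*x)) = (T*t)⁻¹ := by
        rw [h4, Real.exp_neg, Real.exp_log hTtpos]
      calc (U:ℝ) ≤ T*(1-t)^n := hUfin
        _ ≤ T * (T*t)⁻¹ := by
            apply mul_le_mul_of_nonneg_left _ (le_of_lt hTpos)
            calc (1-t)^n ≤ Real.exp (-t)^n := h1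
              _ = Real.exp (-(t*(n:ℝ))) := h2
              _ ≤ Real.exp (-(t*x)) := h3
              _ = (T*t)⁻¹ := h5
        _ = 2^s := by
            rw [mul_inv, ← mul_assoc, mul_inv_cancel₀ (ne_of_gt hTpos), one_mul, ht, inv_inv]
    have hD : ((s*(r-s):ℕ):ℝ) = (s:ℝ)*((r:ℝ)-s) := by
      push_cast [hsr]
      ring
    have hxlt : x < 2^s * ((s:ℝ)*((r:ℝ)-s) * Real.log 2 + 2*Real.log 2) - 1 := by
      have h7 : Real.log (2^(s*(r-s)) * 4 * Real.exp (-t))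
          = ((s*(r-s):ℕ):ℝ)*Real.log 2 + 2*Real.log 2 - t := by
        rw [Real.log_mul (by positivity) (Real.exp_ne_zero _),
          Real.log_mul (by positivity) (by norm_num), Real.log_exp, Real.log_pow]
        have h8 : Real.log 4 = 2*Real.log 2 := by
          rw [show (4:ℝ) = 2^2 by norm_num, Real.log_pow]
          push_cast; ring
        rw [h8]; push_cast; ring
      have hlog : Real.log (T*t) < (s:ℝ)*((r:ℝ)-s)*Real.log 2 + 2*Real.log 2 - t := by
        calc Real.log (T*t) < Real.log (2^(s*(r-s)) * 4 * Real.exp (-t)) :=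
              Real.log_lt_log hTtpos hTkey
          _ = ((s*(r-s):ℕ):ℝ)*Real.log 2 + 2*Real.log 2 - t := h7
          _ = (s:ℝ)*((r:ℝ)-s)*Real.log 2 + 2*Real.log 2 - t := by rw [hD]
      rw [hx]
      have hp : (0:ℝ) < 2^s := by positivity
      nlinarith [hlog, hp, h2st]
    have hGr : (G1 r s : ℝ) ≤ (n:ℝ) + U := by exact_mod_cast hG
    calc (G1 r s : ℝ) ≤ (n:ℝ) + U := hGr
      _ < (x+1) + 2^s := by linarith
      _ < (2:ℝ)^s * ((s:ℝ)*((r:ℝ)-s)*Real.log 2 + 2*Real.log 2 + 1) := by nlinarith [hxlt]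
/-- For `2 ≤ s ≤ r`, `G₁(r,s) < 2^s · (s(r-s)·ln 2 + 2·ln 2 + 1)`. -/
theorem statement15 (r s : ℕ) (hs : 2 ≤ s) (hsr : s ≤ r) :
    (G1 r s : ℝ) <
      (2:ℝ) ^ s * ((s:ℝ) * ((r:ℝ) - s) * Real.log 2 + 2 * Real.log 2 + 1) := by
  exact statement15_aux r s hs hsr
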